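/- For all x, y ∈ I and every infinite word w ∈ ∂I, the sequence (dim_q(x[w]_n)/dim_q(y[w]_n))_{n ∈ ℕ} converges to a strictly positive real number. -/

import Mathlib

open Filter Topology MeasureTheory

/-- Words in the free monoid on two letters `α = true`, `β = false`. -/
abbrev Word := List Bool

/-- Conjugation: reverse the word and swap the two letters. -/
def wconj (x : Word) : Word := x.reverse.map (fun b => !b)

/-- Fusion multiplicity `m(z; x, y)`: the number of triples `(x₀, w, y₀)` with
`x = x₀w`, `y = w̄y₀` and `z = x₀y₀`. -/
def fm (x y z : Word) : ℕ :=
  ((Finset.range (x.length + 1)).filter (fun k =>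
    wconj (x.drop k) <+: y ∧ z = x.take k ++ y.drop (x.length - k))).card

/-- Maximal alternating blocks of a word. -/
def blocks : Word → List Word
  | [] => []
  | a :: rest =>
    match blocks rest with
    | [] => [[a]]
    | b :: bs => if b.head? = some a then [a] :: b :: bs else (a :: b) :: bs

/-- The quantum integer `[n]_q = (qⁿ - q⁻ⁿ)/(q - q⁻¹)`. -/
noncomputable def qnum (q : ℝ) (n : ℕ) : ℝ := (q ^ n - q⁻¹ ^ n) / (q - q⁻¹)

/-- Quantum dimension `dim_q(x) = ∏ᵢ [|xᵢ|+1]_q` over the maximal alternating blocks. -/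
noncomputable def dimq (q : ℝ) (x : Word) : ℝ :=
  ((blocks x).map (fun b => qnum q (b.length + 1))).prod

/-- Classical dimension `dim₁(x) = ∏ᵢ (|xᵢ|+1)` over the maximal alternating blocks. -/
def dim1 (x : Word) : ℕ := ((blocks x).map (fun b => b.length + 1)).prod
/-- The word `[w]_n` formed by the first `n` letters of an infinite word `w ∈ ∂I`. -/
def bprefix (w : ℕ → Bool) (n : ℕ) : Word := (List.range n).map w

/-- `D_w(x, y) = lim_n dim_q(x[w]_n)/dim_q(y[w]_n)` for `x, y ∈ I` and `w ∈ ∂I`. -/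
noncomputable def Dw (q : ℝ) (x y : Word) (w : ℕ → Bool) : ℝ :=
  limUnder atTop (fun n => dimq q (x ++ bprefix w n) / dimq q (y ++ bprefix w n))

/-- Concatenation of a finite word with an infinite word. -/
def bcat (z : Word) (u : ℕ → Bool) : ℕ → Bool :=
  fun n => if n < z.length then z.getD n false else u (n - z.length)

/-- The strictly alternating infinite word starting with the letter `a`. -/
def walt (a : Bool) : ℕ → Bool := fun n => if n % 2 = 0 then a else !a

/-- `(x|w)`: the length of the longest common prefix of a finite word `x` and an
infinite word `w`. -/
def cpb : Word → (ℕ → Bool) → ℕ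
  | [], _ => 0
  | a :: xs, w => if a = w 0 then cpb xs (fun n => w (n + 1)) + 1 else 0


lemma blocks_cons (a : Bool) (v : Word) : blocks (a :: v) =
    match blocks v with
    | [] => [[a]]
    | b :: bs => if b.head? = some a then [a] :: b :: bs else (a :: b) :: bs := rfl

lemma qnum_pos {q : ℝ} (hq0 : 0 < q) (hq1 : q < 1) {n : ℕ} (hn : 1 ≤ n) : 0 < qnum q n := by
  have h1 : 1 < q⁻¹ := (one_lt_inv₀ hq0).mpr hq1
  have h2 : q < q⁻¹ := hq1.trans h1
  have hnum : q ^ n - q⁻¹ ^ n < 0 := by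
    have := pow_lt_pow_left₀ h2 hq0.le (by omega : n ≠ 0)
    linarith
  exact div_pos_of_neg_of_neg hnum (by linarith)

lemma dimq_pos {q : ℝ} (hq0 : 0 < q) (hq1 : q < 1) (u : Word) : 0 < dimq q u := by
  apply List.prod_pos
  intro a ha
  simp only [List.mem_map] at ha
  obtain ⟨b, _, rfl⟩ := ha
  exact qnum_pos hq0 hq1 (by omega)

lemma blocks_cons_head (a : Bool) (t : Word) :
    ∃ c cs, blocks (a :: t) = c :: cs ∧ c.head? = some a := by
  rw [blocks_cons]
  rcases hb : blocks t with _ | ⟨b, bs⟩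
  · exact ⟨[a], [], rfl, rfl⟩
  · by_cases h : b.head? = some a
    · exact ⟨[a], b :: bs, by simp [h], rfl⟩
    · exact ⟨a :: b, bs, by simp [h], rfl⟩

lemma blocks_append (s t : Word) (hs : s ≠ []) (h : s.getLast? = t.head?) :
    blocks (s ++ t) = blocks s ++ blocks t := by
  induction s with
  | nil => simp at hs
  | cons a s' ih =>
    rcases eq_or_ne s' [] with rfl | hs'
    · simp only [List.getLast?_singleton] at h
      rcases t with _ | ⟨b, t'⟩
      · simp [blocks]
      · simp only [List.head?_cons, Option.some.injEq] at h
        subst h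
        obtain ⟨c, cs, hct, hch⟩ := blocks_cons_head a t'
        show blocks (a :: a :: t') = blocks [a] ++ blocks (a :: t')
        rw [blocks_cons (v := a :: t'), hct]
        simp [hch, blocks]
    · have hlast : s'.getLast? = t.head? := by
        rw [← h]
        exact (List.getLast?_append_of_ne_nil [a] hs').symm
      have ihe := ih hs' hlast
      obtain ⟨c, cs, hcs, hch⟩ := blocks_cons_head s'.head! s'.tail
      have hs'' : s' = s'.head! :: s'.tail := by
        rcases s' with _ | ⟨b, t'⟩
        · simp at hs'
        · rfl
      rw [← hs''] at hcs
      have h1 : blocks (s' ++ t) = c :: (cs ++ blocks t) := by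
        rw [ihe, hcs]; simp
      show blocks (a :: (s' ++ t)) = blocks (a :: s') ++ blocks t
      rw [blocks_cons, h1, blocks_cons (v := s'), hcs]
      dsimp only
      split_ifs <;> simp

lemma dimq_append {q : ℝ} (s t : Word) (hs : s ≠ []) (h : s.getLast? = t.head?) :
    dimq q (s ++ t) = dimq q s * dimq q t := by
  unfold dimq
  rw [blocks_append s t hs h, List.map_append, List.prod_append]

lemma blocks_alt (s : Word) (hs : s ≠ []) (hc : List.Chain' (· ≠ ·) s) :
    blocks s = [s] := by
  induction s with
  | nil => simp at hs
  | cons a s' ih =>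
    rcases eq_or_ne s' [] with rfl | hs'
    · rfl
    · have hc' : List.Chain' (· ≠ ·) s' := hc.tail
      have hih := ih hs' hc'
      rw [blocks_cons, hih]
      have : s'.head? ≠ some a := by
        rcases s' with _ | ⟨b, t⟩
        · simp at hs'
        · simp only [List.head?_cons, ne_eq, Option.some.injEq]
          have := List.isChain_cons_cons.mp hc
          exact fun hba => this.1 (hba ▸ rfl)
      simp [this]

lemma bprefix_succ (w : ℕ → Bool) (n : ℕ) :
    bprefix w (n + 1) = bprefix w n ++ [w n] := by
  simp [bprefix, List.range_succ]

lemma bprefix_length (w : ℕ → Bool) (n : ℕ) : (bprefix w n).length = n := by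
  simp [bprefix]

lemma bprefix_ne_nil (w : ℕ → Bool) {n : ℕ} (hn : 1 ≤ n) : bprefix w n ≠ [] := by
  intro h
  have := bprefix_length w n
  rw [h] at this
  simp at this
  omega

lemma bprefix_getLast? (w : ℕ → Bool) (n : ℕ) :
    (bprefix w (n + 1)).getLast? = some (w n) := by
  rw [bprefix_succ]
  exact List.getLast?_concat

lemma bprefix_head? (w : ℕ → Bool) {n : ℕ} (hn : 1 ≤ n) :
    (bprefix w n).head? = some (w 0) := by
  rcases n with _ | n
  · omega
  · simp [bprefix, List.range_succ_eq_map]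

lemma bprefix_add (w : ℕ → Bool) (m k : ℕ) :
    bprefix w (m + k) = bprefix w m ++ (List.range k).map (fun i => w (m + i)) := by
  simp [bprefix, List.range_add, Function.comp]

lemma bprefix_chain' (w : ℕ → Bool) (hw : ∀ k, w k ≠ w (k + 1)) (n : ℕ) :
    List.Chain' (· ≠ ·) (bprefix w n) := by
  induction n with
  | zero => simp [bprefix, List.Chain']
  | succ n ih =>
    rw [bprefix_succ, List.Chain', List.isChain_append]
    refine ⟨ih, List.isChain_singleton _, ?_⟩
    intro a ha b hb
    rcases n with _ | m
    · simp [bprefix] at ha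
    · rw [bprefix_getLast?] at ha
      simp only [List.head?_cons, Option.mem_def, Option.some.injEq] at ha hb
      subst ha; subst hb
      exact hw m

lemma alt_blocks (w : ℕ → Bool) (hw : ∀ k, w k ≠ w (k + 1)) (x : Word) :
    ∃ (B : List Word) (x2 : Word), ∀ n, 1 ≤ n →
      blocks (x ++ bprefix w n) = B ++ [x2 ++ bprefix w n] := by
  induction x with
  | nil =>
    refine ⟨[], [], fun n hn => ?_⟩
    simp only [List.nil_append]
    exact blocks_alt _ (bprefix_ne_nil w hn) (bprefix_chain' w hw n)
  | cons a x' ih =>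
    obtain ⟨B, x2, hB⟩ := ih
    rcases B with _ | ⟨b, B'⟩
    · have hhead : ∀ n, 1 ≤ n →
          (x2 ++ bprefix w n).head? = some (x2.head?.getD (w 0)) := by
        intro n hn
        rcases x2 with _ | ⟨c, x2'⟩
        · simpa using bprefix_head? w hn
        · rfl
      by_cases hax : x2.head?.getD (w 0) = a
      · refine ⟨[[a]], x2, fun n hn => ?_⟩
        have h1 := hB n hn
        simp only [List.nil_append] at h1
        show blocks (a :: (x' ++ bprefix w n)) = _
        rw [blocks_cons, h1]
        dsimp only
        rw [hhead n hn, hax]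
        simp
      · refine ⟨[], a :: x2, fun n hn => ?_⟩
        have h1 := hB n hn
        simp only [List.nil_append] at h1
        show blocks (a :: (x' ++ bprefix w n)) = _
        rw [blocks_cons, h1]
        dsimp only
        rw [hhead n hn]
        simp [hax]
    · have h1' : ∀ n, 1 ≤ n → blocks (x' ++ bprefix w n)
          = b :: (B' ++ [x2 ++ bprefix w n]) := by
        intro n hn
        rw [hB n hn]
        simp
      by_cases hba : b.head? = some a
      · refine ⟨[a] :: b :: B', x2, fun n hn => ?_⟩
        show blocks (a :: (x' ++ bprefix w n)) = _
        rw [blocks_cons, h1' n hn]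
        dsimp only
        simp [hba]
      · refine ⟨(a :: b) :: B', x2, fun n hn => ?_⟩
        show blocks (a :: (x' ++ bprefix w n)) = _
        rw [blocks_cons, h1' n hn]
        dsimp only
        simp [hba]

lemma alt_dimq {q : ℝ} (hq0 : 0 < q) (hq1 : q < 1)
    (w : ℕ → Bool) (hw : ∀ k, w k ≠ w (k + 1)) (x : Word) :
    ∃ (K : ℝ) (c : ℕ), 0 < K ∧ ∀ n, 1 ≤ n →
      dimq q (x ++ bprefix w n) = K * qnum q (n + c + 1) := by
  obtain ⟨B, x2, hB⟩ := alt_blocks w hw x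
  refine ⟨(B.map (fun b => qnum q (b.length + 1))).prod, x2.length, ?_, fun n hn => ?_⟩
  · apply List.prod_pos
    intro a ha
    simp only [List.mem_map] at ha
    obtain ⟨b, _, rfl⟩ := ha
    exact qnum_pos hq0 hq1 (by omega)
  · unfold dimq
    rw [hB n hn, List.map_append, List.prod_append]
    simp only [List.map_cons, List.map_nil, List.prod_cons, List.prod_nil, mul_one,
      List.length_append, bprefix_length]
    congr 2
    omega

lemma qnum_ratio_tendsto {q : ℝ} (hq0 : 0 < q) (hq1 : q < 1) (a b : ℕ) :
    ∃ L : ℝ, 0 < L ∧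
      Tendsto (fun n : ℕ => qnum q (n + a + 1) / qnum q (n + b + 1)) atTop (𝓝 L) := by
  have hq : q ≠ 0 := ne_of_gt hq0
  have hiq : 1 < q⁻¹ := (one_lt_inv₀ hq0).mpr hq1
  have hd : q - q⁻¹ ≠ 0 := by linarith
  have key : ∀ (c n : ℕ), q ^ (c+1) * (q^2)^n - q⁻¹ ^ (c+1)
      = (q ^ (n+c+1) - q⁻¹ ^ (n+c+1)) * q ^ n := by
    intro c n
    have h1 : q⁻¹ ^ (n+c+1) * q ^ n = q⁻¹ ^ (c+1) := by
      rw [show n+c+1 = n+(c+1) by ring, pow_add]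
      field_simp
      rw [← mul_pow, one_div, inv_mul_cancel₀ hq, one_pow]
    have h2 : q ^ (n+c+1) * q ^ n = q ^ (c+1) * (q^2)^n := by
      rw [← pow_add, ← pow_mul, ← pow_add]
      congr 1
      ring
    rw [sub_mul, h1, h2]
  have keyneg : ∀ (c n : ℕ), q ^ (c+1) * (q^2)^n - q⁻¹ ^ (c+1) < 0 := by
    intro c n
    rw [key]
    apply mul_neg_of_neg_of_pos
    · have : q ^ (n+c+1) < q⁻¹ ^ (n+c+1) :=
        pow_lt_pow_left₀ (hq1.trans hiq) hq0.le (by omega)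
      linarith
    · positivity
  have hqnum : ∀ (c n : ℕ), qnum q (n+c+1)
      = (q ^ (c+1) * (q^2)^n - q⁻¹ ^ (c+1)) / ((q - q⁻¹) * q ^ n) := by
    intro c n
    rw [key, qnum, mul_div_mul_right _ _ (pow_ne_zero n hq)]
  have heq : ∀ n : ℕ, qnum q (n+a+1) / qnum q (n+b+1)
      = (q ^ (a+1) * (q^2)^n - q⁻¹ ^ (a+1)) / (q ^ (b+1) * (q^2)^n - q⁻¹ ^ (b+1)) := by
    intro n
    rw [hqnum a n, hqnum b n]
    have hD : (q - q⁻¹) * q ^ n ≠ 0 := mul_ne_zero hd (pow_ne_zero _ hq)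
    exact div_div_div_cancel_right₀ hD _ _
  have hpow : Tendsto (fun n : ℕ => (q^2)^n) atTop (𝓝 0) := by
    apply tendsto_pow_atTop_nhds_zero_of_lt_one (by positivity)
    nlinarith
  have hnum : Tendsto (fun n : ℕ => q ^ (a+1) * (q^2)^n - q⁻¹ ^ (a+1)) atTop
      (𝓝 (q ^ (a+1) * 0 - q⁻¹ ^ (a+1))) := ((hpow.const_mul _).sub tendsto_const_nhds)
  have hden : Tendsto (fun n : ℕ => q ^ (b+1) * (q^2)^n - q⁻¹ ^ (b+1)) atTop
      (𝓝 (q ^ (b+1) * 0 - q⁻¹ ^ (b+1))) := ((hpow.const_mul _).sub tendsto_const_nhds)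
  have hL : (q ^ (b+1) * 0 - q⁻¹ ^ (b+1)) ≠ 0 := by
    simp only [mul_zero, zero_sub, ne_eq, neg_eq_zero]
    positivity
  refine ⟨_, ?_, (Tendsto.div hnum hden hL).congr (fun n => (heq n).symm)⟩
  rw [mul_zero, mul_zero, zero_sub, zero_sub, neg_div_neg_eq]
  positivity

/-- For all `x, y ∈ I` and every infinite word `w ∈ ∂I`, the sequence
`dim_q(x[w]_n)/dim_q(y[w]_n)` converges to a strictly positive real number. -/
theorem dimq_ratio_tendsto (q : ℝ) (hq0 : 0 < q) (hq1 : q < 1)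
    (x y : Word) (w : ℕ → Bool) :
    ∃ L : ℝ, 0 < L ∧
      Tendsto (fun n => dimq q (x ++ bprefix w n) / dimq q (y ++ bprefix w n))
        atTop (𝓝 L) := by
  by_cases hw : ∀ k, w k ≠ w (k + 1)
  · obtain ⟨Kx, cx, hKx, hfx⟩ := alt_dimq hq0 hq1 w hw x
    obtain ⟨Ky, cy, hKy, hfy⟩ := alt_dimq hq0 hq1 w hw y
    obtain ⟨L, hL, hT⟩ := qnum_ratio_tendsto hq0 hq1 cx cy
    refine ⟨Kx / Ky * L, by positivity, ?_⟩
    have hT' : Tendsto (fun n : ℕ => Kx / Ky * (qnum q (n + cx + 1) / qnum q (n + cy + 1)))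
        atTop (𝓝 (Kx / Ky * L)) := hT.const_mul _
    apply hT'.congr'
    filter_upwards [eventually_ge_atTop 1] with n hn
    rw [hfx n hn, hfy n hn, mul_div_mul_comm]
  · push_neg at hw
    obtain ⟨m, hm⟩ := hw
    refine ⟨dimq q (x ++ bprefix w (m + 1)) / dimq q (y ++ bprefix w (m + 1)),
      div_pos (dimq_pos hq0 hq1 _) (dimq_pos hq0 hq1 _), ?_⟩
    apply tendsto_const_nhds.congr'
    filter_upwards [eventually_ge_atTop (m + 1)] with n hn
    obtain ⟨k, rfl⟩ : ∃ k, n = (m + 1) + k := ⟨n - (m + 1), by omega⟩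
    rcases Nat.eq_zero_or_pos k with rfl | hk
    · rfl
    · have hsplit : ∀ z : Word, dimq q (z ++ bprefix w ((m + 1) + k))
          = dimq q (z ++ bprefix w (m + 1))
            * dimq q ((List.range k).map (fun i => w (m + 1 + i))) := by
        intro z
        rw [bprefix_add, ← List.append_assoc]
        apply dimq_append
        · intro hcon
          exact bprefix_ne_nil w (by omega : 1 ≤ m + 1) (List.append_eq_nil_iff.mp hcon).2
        · rw [List.getLast?_append_of_ne_nil _ (bprefix_ne_nil w (by omega : 1 ≤ m + 1))]
          rw [bprefix_getLast?]
          rcases k with _ | k'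
          · omega
          · rw [List.range_succ_eq_map]
            simp [hm]
      rw [hsplit x, hsplit y]
      have hS := dimq_pos hq0 hq1 ((List.range k).map (fun i => w (m + 1 + i)))
      rw [mul_div_mul_right _ _ hS.ne']
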